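/- Let ρ ∈ (0,1), a = √(ρ/(1−ρ)), and define R_n(ε) = E[1{1 − Φ(aZ) ≤ ε} Φ(aZ)^n] / E[Φ(aZ)^n] with Z standard normal. Set ε* = (1−ρ)/(nρ). Then for every c > 0: (i) for all sufficiently large n, R_n(ε* − c) = 0, and (ii) R_n(ε* + c) → 1 as n → ∞. -/

import Mathlib

open MeasureTheory ProbabilityTheory Real Filter
open scoped NNReal ENNReal

noncomputable def stdPDF (x : ℝ) : ℝ := (Real.sqrt (2 * Real.pi))⁻¹ * Real.exp (-(x ^ 2) / 2)
noncomputable def stdCDF (x : ℝ) : ℝ := ∫ t in Set.Iic x, stdPDF t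

lemma stdPDF_eq : stdPDF = gaussianPDFReal 0 1 := by
  funext x
  simp [stdPDF, gaussianPDFReal]

lemma stdPDF_nonneg (x : ℝ) : 0 ≤ stdPDF x := by
  rw [stdPDF_eq]; exact gaussianPDFReal_nonneg 0 1 x

lemma integrable_stdPDF : Integrable stdPDF := by
  rw [stdPDF_eq]; exact integrable_gaussianPDFReal 0 1

lemma stdCDF_nonneg (x : ℝ) : 0 ≤ stdCDF x :=
  integral_nonneg stdPDF_nonneg

lemma stdCDF_le_one (x : ℝ) : stdCDF x ≤ 1 := by
  have h := setIntegral_le_integral (s := Set.Iic x) integrable_stdPDF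
    (ae_of_all _ stdPDF_nonneg)
  rw [stdCDF]
  calc ∫ t in Set.Iic x, stdPDF t ≤ ∫ t, stdPDF t := h
    _ = 1 := by rw [stdPDF_eq]; exact integral_gaussianPDFReal_eq_one 0 one_ne_zero

lemma stdCDF_mono : Monotone stdCDF := by
  intro x y hxy
  exact setIntegral_mono_set integrable_stdPDF.integrableOn
    (ae_of_all _ stdPDF_nonneg)
    (HasSubset.Subset.eventuallyLE (Set.Iic_subset_Iic.mpr hxy))

lemma stdCDF_measurable : Measurable stdCDF := stdCDF_mono.measurable

lemma stdCDF_eq_toReal (x : ℝ) : stdCDF x = (gaussianReal 0 1 (Set.Iic x)).toReal := by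
  rw [gaussianReal_apply_eq_integral 0 one_ne_zero, ENNReal.toReal_ofReal]
  · rw [stdCDF, stdPDF_eq]
  · rw [← stdPDF_eq, ← stdCDF]; exact stdCDF_nonneg x

lemma tendsto_stdCDF : Tendsto stdCDF atTop (nhds 1) := by
  have h : Tendsto (fun x => gaussianReal 0 1 (Set.Iic x)) atTop
      (nhds (gaussianReal 0 1 Set.univ)) := tendsto_measure_Iic_atTop _
  rw [measure_univ] at h
  have h2 : Tendsto (fun x => (gaussianReal 0 1 (Set.Iic x)).toReal) atTop (nhds 1) := by
    have := (ENNReal.tendsto_toReal (by norm_num)).comp h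
    exact this
  simpa [← stdCDF_eq_toReal] using h2

/-- with R_n(ε) = E[1{1−Φ(aZ) ≤ ε} Φ(aZ)^n]/E[Φ(aZ)^n] and
ε* = (1−ρ)/(nρ), for every c > 0: (i) R_n(ε* − c) = 0 for all large n, and
(ii) R_n(ε* + c) → 1 as n → ∞. -/
theorem stmt_11 {Ω : Type*} [MeasurableSpace Ω] (μ : Measure Ω) [IsProbabilityMeasure μ]
    (ρ : ℝ) (hρ : ρ ∈ Set.Ioo (0:ℝ) 1) (a : ℝ) (ha : a = Real.sqrt (ρ / (1 - ρ)))
    (Z : Ω → ℝ) (hZ : Measure.map Z μ = gaussianReal 0 1)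
    (R : ℕ → ℝ → ℝ)
    (hR : ∀ n ε, R n ε =
      (∫ ω, (if 1 - stdCDF (a * Z ω) ≤ ε then (stdCDF (a * Z ω)) ^ n else 0) ∂μ) /
        ∫ ω, (stdCDF (a * Z ω)) ^ n ∂μ)
    (c : ℝ) (hc : 0 < c) :
    (∃ N : ℕ, ∀ n ≥ N, R n ((1 - ρ) / (n * ρ) - c) = 0) ∧
    Tendsto (fun n : ℕ => R n ((1 - ρ) / (n * ρ) + c)) atTop (nhds 1) := by
  obtain ⟨hρ0, hρ1⟩ := hρ
  have ha_pos : 0 < a := by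
    rw [ha]; exact Real.sqrt_pos.mpr (div_pos hρ0 (by linarith))
  have hZae : AEMeasurable Z μ := by
    by_contra h
    rw [Measure.map_of_not_aemeasurable h] at hZ
    have h1 := measure_univ (μ := gaussianReal 0 1)
    rw [← hZ] at h1; simp at h1
  set ν := gaussianReal 0 1 with hν
  set F : ℝ → ℝ := fun x => stdCDF (a * x) with hF
  have hFmeas : Measurable F := stdCDF_measurable.comp (measurable_const_mul a)
  have hF0 : ∀ x, 0 ≤ F x := fun x => stdCDF_nonneg _
  have hF1 : ∀ x, F x ≤ 1 := fun x => stdCDF_le_one _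
  have hDen : ∀ n : ℕ, ∫ ω, (stdCDF (a * Z ω)) ^ n ∂μ = ∫ x, F x ^ n ∂ν := by
    intro n
    rw [← hZ, integral_map hZae ((hFmeas.pow_const n).aestronglyMeasurable)]
  have hIndMeas : ∀ (n : ℕ) (ε : ℝ),
      Measurable (fun x => if 1 - F x ≤ ε then F x ^ n else 0) := by
    intro n ε
    exact Measurable.ite (measurableSet_le (measurable_const.sub hFmeas) measurable_const)
      (hFmeas.pow_const n) measurable_const
  have hNum : ∀ (n : ℕ) (ε : ℝ),
      (∫ ω, (if 1 - stdCDF (a * Z ω) ≤ ε then (stdCDF (a * Z ω)) ^ n else 0) ∂μ)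
      = ∫ x, (if 1 - F x ≤ ε then F x ^ n else 0) ∂ν := by
    intro n ε
    rw [← hZ, integral_map hZae ((hIndMeas n ε).aestronglyMeasurable)]
  constructor
  · -- Part (i)
    obtain ⟨N, hN⟩ := exists_nat_gt ((1 - ρ) / (c * ρ))
    refine ⟨max N 1, fun n hn => ?_⟩
    have hn1 : (1:ℝ) ≤ n := by exact_mod_cast le_trans (le_max_right N 1) hn
    have hnN : (N:ℝ) ≤ n := by exact_mod_cast le_trans (le_max_left N 1) hn
    have hεneg : (1 - ρ) / (n * ρ) - c < 0 := by
      have hnpos : (0:ℝ) < n := by linarith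
      have h2 : (1 - ρ) / (n * ρ) < c := by
        rw [div_lt_iff₀ (by positivity)]
        rw [div_lt_iff₀ (by positivity)] at hN
        nlinarith
      linarith
    rw [hR]
    have hz : ∀ ω, (if 1 - stdCDF (a * Z ω) ≤ (1 - ρ) / (n * ρ) - c
        then (stdCDF (a * Z ω)) ^ n else 0) = 0 := by
      intro ω
      rw [if_neg]
      intro h
      have := stdCDF_le_one (a * Z ω)
      linarith
    simp only [hz]
    simp
  · -- Part (ii)
    set d := min c 2⁻¹ with hd
    have hd0 : 0 < d := lt_min hc (by norm_num)
    have hdc : d ≤ c := min_le_left _ _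
    have hdh : d ≤ 2⁻¹ := min_le_right _ _
    obtain ⟨t₀, ht₀⟩ : ∃ t₀, 1 - d / 2 ≤ stdCDF t₀ :=
      (tendsto_stdCDF.eventually (eventually_ge_nhds (show 1 - d / 2 < 1 by linarith))).exists
    set x₀ := t₀ / a with hx₀
    have hFx : ∀ x, x₀ ≤ x → 1 - d / 2 ≤ F x := by
      intro x hx
      refine le_trans ht₀ (stdCDF_mono ?_)
      calc t₀ = a * x₀ := by rw [hx₀]; field_simp
        _ ≤ a * x := mul_le_mul_of_nonneg_left hx ha_pos.le
    set p := (ν (Set.Ici x₀)).toReal with hp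
    have hp0 : 0 < p := by
      refine ENNReal.toReal_pos (fun h0 => ?_) (measure_ne_top _ _)
      have hvol := (gaussianReal_absolutelyContinuous' 0 one_ne_zero) h0
      rw [Real.volume_Ici] at hvol
      simp at hvol
    have hIntPow : ∀ n : ℕ, Integrable (fun x => F x ^ n) ν := by
      intro n
      refine Integrable.mono' (integrable_const 1)
        ((hFmeas.pow_const n).aestronglyMeasurable) (ae_of_all _ fun x => ?_)
      rw [Real.norm_eq_abs, abs_of_nonneg (pow_nonneg (hF0 x) n)]
      exact pow_le_one₀ (hF0 x) (hF1 x)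
    have hIntInd : ∀ (n : ℕ) (ε : ℝ),
        Integrable (fun x => if 1 - F x ≤ ε then 0 else F x ^ n) ν := by
      intro n ε
      refine Integrable.mono' (integrable_const 1)
        (Measurable.aestronglyMeasurable ?_) (ae_of_all _ fun x => ?_)
      · exact Measurable.ite (measurableSet_le (measurable_const.sub hFmeas) measurable_const)
          measurable_const (hFmeas.pow_const n)
      · rw [Real.norm_eq_abs]
        split
        · simp
        · rw [abs_of_nonneg (pow_nonneg (hF0 x) n)]
          exact pow_le_one₀ (hF0 x) (hF1 x)
    -- lower bound on denominator
    have hDlow : ∀ n : ℕ, (1 - d / 2) ^ n * p ≤ ∫ x, F x ^ n ∂ν := by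
      intro n
      have hind : ∫ x, Set.indicator (Set.Ici x₀) (fun _ => (1 - d / 2) ^ n) x ∂ν
          = (1 - d / 2) ^ n * p := by
        rw [integral_indicator measurableSet_Ici, setIntegral_const, smul_eq_mul, hp, mul_comm]; rfl
      rw [← hind]
      refine integral_mono ((integrable_const _).indicator measurableSet_Ici) (hIntPow n)
        (fun x => ?_)
      rw [Set.indicator_apply]
      split
      · next hx => exact pow_le_pow_left₀ (by linarith) (hFx x hx) n
      · exact pow_nonneg (hF0 x) n
    have hDpos : ∀ n : ℕ, 0 < ∫ x, F x ^ n ∂ν := by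
      intro n
      refine lt_of_lt_of_le ?_ (hDlow n)
      have : (0:ℝ) < 1 - d / 2 := by linarith
      positivity
    -- ε_n ≥ d
    have hεd : ∀ n : ℕ, d ≤ (1 - ρ) / (n * ρ) + c := by
      intro n
      have : (0:ℝ) ≤ (1 - ρ) / (n * ρ) :=
        div_nonneg (by linarith) (by positivity)
      linarith
    -- B_n bounds
    set B : ℕ → ℝ := fun n =>
      ∫ x, (if 1 - F x ≤ (1 - ρ) / (n * ρ) + c then 0 else F x ^ n) ∂ν with hB
    have hB0 : ∀ n, 0 ≤ B n := by
      intro n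
      refine integral_nonneg fun x => ?_
      simp only [Pi.zero_apply]
      split
      · exact le_refl 0
      · exact pow_nonneg (hF0 x) n
    have hBle : ∀ n, B n ≤ (1 - d) ^ n := by
      intro n
      rw [hB]
      calc (∫ x, (if 1 - F x ≤ (1 - ρ) / (n * ρ) + c then 0 else F x ^ n) ∂ν)
          ≤ ∫ _, (1 - d) ^ n ∂ν := by
            refine integral_mono (hIntInd n _) (integrable_const _) fun x => ?_
            split
            · next => exact pow_nonneg (by linarith) n
            · next h =>
                push_neg at h
                have := hεd n
                exact pow_le_pow_left₀ (hF0 x) (by linarith) n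
        _ = (1 - d) ^ n := by simp
    -- rewrite R
    have key : ∀ n : ℕ, R n ((1 - ρ) / (n * ρ) + c)
        = 1 - B n / ∫ x, F x ^ n ∂ν := by
      intro n
      rw [hR, hNum, hDen]
      have hsplit : (fun x => if 1 - F x ≤ (1 - ρ) / (n * ρ) + c then F x ^ n else 0)
          = fun x => F x ^ n - (if 1 - F x ≤ (1 - ρ) / (n * ρ) + c then 0 else F x ^ n) := by
        funext x; split <;> ring
      rw [hsplit, integral_sub (hIntPow n) (hIntInd n _), sub_div,
        div_self (hDpos n).ne', hB]
    have hsq : Tendsto (fun n : ℕ => B n / ∫ x, F x ^ n ∂ν) atTop (nhds 0) := by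
      have hg : Tendsto (fun n : ℕ => (1 - d) ^ n / ((1 - d / 2) ^ n * p)) atTop (nhds 0) := by
        have heq : (fun n : ℕ => (1 - d) ^ n / ((1 - d / 2) ^ n * p))
            = fun n : ℕ => ((1 - d) / (1 - d / 2)) ^ n * p⁻¹ := by
          funext n
          rw [div_pow, div_mul_eq_div_div, div_eq_mul_inv]
        rw [heq]
        have hr0 : (0:ℝ) ≤ (1 - d) / (1 - d / 2) := by
          apply div_nonneg <;> linarith
        have hr1 : (1 - d) / (1 - d / 2) < 1 := by
          rw [div_lt_one (by linarith)]; linarith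
        have := (tendsto_pow_atTop_nhds_zero_of_lt_one hr0 hr1).mul_const p⁻¹
        simpa using this
      refine squeeze_zero (fun n => div_nonneg (hB0 n) (hDpos n).le) (fun n => ?_) hg
      have h2 : (0:ℝ) < 1 - d / 2 := by linarith
      exact div_le_div₀ (pow_nonneg (by linarith) n) (hBle n) (by positivity) (hDlow n)
    have := hsq.const_sub 1
    rw [sub_zero] at this
    exact this.congr fun n => (key n).symm
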